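/- Let P be a row-stochastic matrix on a finite state space S (P(j|i) >= 0, sum_j P(j|i) = 1). Define γ = 1 - min_{i,k ∈ S} sum_{j ∈ S} min{P(j|i), P(j|k)}. Then for every vector v ∈ R^{|S|}, sp(Pv) <= γ·sp(v), where sp(u) = max_i u(i) - min_i u(i). -/
import Mathlib


/-- The span semi-norm. -/
noncomputable def sp {S : Type*} [Fintype S] [Nonempty S] (v : S → ℝ) : ℝ :=
  (⨆ i, v i) - ⨅ i, v i

/-- Dobrushin contraction: for a row-stochastic matrix `P` on a finite state space,
`sp (P v) ≤ γ · sp v` where `γ = 1 - min_{i,k} ∑_j min (P j|i) (P j|k)`. -/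
theorem span_contraction_stochastic {S : Type*} [Fintype S] [Nonempty S]
    (P : S → S → ℝ) (hP : ∀ i j, 0 ≤ P i j) (hrow : ∀ i, ∑ j, P i j = 1)
    (v : S → ℝ) :
    sp (fun i => ∑ j, P i j * v j) ≤
      (1 - ⨅ i, ⨅ k, ∑ j, min (P i j) (P k j)) * sp v := by
  classical
  set γ : ℝ := 1 - ⨅ i, ⨅ k, ∑ j, min (P i j) (P k j) with hγ
  have hbddv : BddAbove (Set.range v) := (Set.finite_range v).bddAbove
  have hbddv' : BddBelow (Set.range v) := (Set.finite_range v).bddBelow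
  have hM : ∀ j, v j ≤ ⨆ i, v i := fun j => le_ciSup hbddv j
  have hm : ∀ j, (⨅ i, v i) ≤ v j := fun j => ciInf_le hbddv' j
  have hspv : 0 ≤ sp v := by
    obtain ⟨j⟩ := ‹Nonempty S›
    have := (hm j).trans (hM j)
    simpa [sp] using this
  have key : ∀ i k, (∑ j, P i j * v j) - (∑ j, P k j * v j) ≤ γ * sp v := by
    intro i k
    set d : ℝ := 1 - ∑ j, min (P i j) (P k j) with hd
    have hdγ : d ≤ γ := by
      apply sub_le_sub_left
      refine le_trans (ciInf_le ((Set.finite_range _).bddBelow) i) ?_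
      exact ciInf_le ((Set.finite_range _).bddBelow) k
    have hsumi : ∑ j, (P i j - min (P i j) (P k j)) = d := by
      rw [Finset.sum_sub_distrib, hrow i, hd]
    have hsumk : ∑ j, (P k j - min (P i j) (P k j)) = d := by
      rw [Finset.sum_sub_distrib, hrow k, hd]
    have h1 : ∑ j, (P i j - min (P i j) (P k j)) * v j ≤ d * (⨆ i, v i) := by
      calc ∑ j, (P i j - min (P i j) (P k j)) * v j
          ≤ ∑ j, (P i j - min (P i j) (P k j)) * (⨆ i, v i) := by
            refine Finset.sum_le_sum fun j _ => ?_
            exact mul_le_mul_of_nonneg_left (hM j)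
              (by simp [sub_nonneg, min_le_left])
        _ = d * (⨆ i, v i) := by rw [← Finset.sum_mul, hsumi]
    have h2 : d * (⨅ i, v i) ≤ ∑ j, (P k j - min (P i j) (P k j)) * v j := by
      calc d * (⨅ i, v i) = ∑ j, (P k j - min (P i j) (P k j)) * (⨅ i, v i) := by
            rw [← Finset.sum_mul, hsumk]
        _ ≤ ∑ j, (P k j - min (P i j) (P k j)) * v j := by
            refine Finset.sum_le_sum fun j _ => ?_
            exact mul_le_mul_of_nonneg_left (hm j)
              (by simp [sub_nonneg, min_le_right])
    have hsplit : (∑ j, P i j * v j) - (∑ j, P k j * v j)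
        = (∑ j, (P i j - min (P i j) (P k j)) * v j)
          - (∑ j, (P k j - min (P i j) (P k j)) * v j) := by
      simp only [sub_mul]
      rw [Finset.sum_sub_distrib, Finset.sum_sub_distrib]
      ring
    calc (∑ j, P i j * v j) - (∑ j, P k j * v j)
        ≤ d * (⨆ i, v i) - d * (⨅ i, v i) := by
          rw [hsplit]; exact sub_le_sub h1 h2
      _ = d * sp v := by rw [sp]; ring
      _ ≤ γ * sp v := mul_le_mul_of_nonneg_right hdγ hspv
  have hbddf : BddAbove (Set.range fun i => ∑ j, P i j * v j) :=
    (Set.finite_range _).bddAbove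
  have hbddf' : BddBelow (Set.range fun i => ∑ j, P i j * v j) :=
    (Set.finite_range _).bddBelow
  simp only [sp]; rw [sub_le_iff_le_add]
  refine ciSup_le fun i => ?_
  have h : (∑ j, P i j * v j) - γ * sp v ≤ ⨅ k, ∑ j, P k j * v j :=
    le_ciInf fun k => by have := key i k; linarith
  rw [show sp v = (⨆ i, v i) - ⨅ i, v i from rfl] at h
  linarith
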